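/- Let m > 0, p > 1 with γ := m(p-1)-1 > 0, and let f ∈ C¹([0,1]) with f(0)=f(1)=0. Consider the c = 0 equation of trajectories dZ/dX = -(Z^p + m X^{γ/(p-1)-1} f(X)) / ((p-1) X Z^{p-1}) for 0 < X < 1, Z > 0. For any k ∈ ℝ, the function Z(X) = X^{-1/(p-1)} [k - (mp/(p-1)) ∫₀^X u^{m-1} f(u) du]^{1/p} is a solution on any interval where the bracket is positive. -/

import Mathlib

open Real Set intervalIntegral

/-- Explicit first integral of the zero-speed trajectory equation:
`Z(X) = X^{-1/(p-1)} [k - (mp/(p-1)) ∫₀^X u^{m-1} f(u) du]^{1/p}` solves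
`dZ/dX = -(Z^p + m X^{γ/(p-1)-1} f(X)) / ((p-1) X Z^{p-1})` wherever the bracket is
positive. -/
theorem stmt_4 (m p γ k : ℝ) (hm : 0 < m) (hp : 1 < p)
    (hγ : γ = m * (p - 1) - 1) (hγpos : 0 < γ)
    (f : ℝ → ℝ) (hf : ContDiffOn ℝ 1 f (Icc 0 1)) (hf0 : f 0 = 0) (hf1 : f 1 = 0)
    (Z : ℝ → ℝ)
    (hZ : ∀ X, Z X = X ^ (-(1 / (p - 1))) *
      (k - (m * p / (p - 1)) * ∫ u in (0:ℝ)..X, u ^ (m - 1) * f u) ^ (1 / p)) :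
    ∀ X ∈ Ioo (0:ℝ) 1,
      0 < k - (m * p / (p - 1)) * (∫ u in (0:ℝ)..X, u ^ (m - 1) * f u) →
      HasDerivAt Z
        (-(Z X ^ p + m * X ^ (γ / (p - 1) - 1) * f X) / ((p - 1) * X * Z X ^ (p - 1)))
        X := by
  intro X hX hbpos
  obtain ⟨hX0, hX1⟩ := hX
  have hq : (0:ℝ) < p - 1 := by linarith
  have hq' : p - 1 ≠ 0 := ne_of_gt hq
  have hp0 : p ≠ 0 := by positivity
  have hXne : X ≠ 0 := ne_of_gt hX0
  set C : ℝ := m * p / (p - 1) with hC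
  set B : ℝ → ℝ := fun Y => k - C * ∫ u in (0:ℝ)..Y, u ^ (m - 1) * f u with hB
  have hb : 0 < B X := hbpos
  have hbne : B X ≠ 0 := ne_of_gt hb
  -- continuity of the integrand near X
  have hfc : ContinuousOn f (Icc 0 1) := hf.continuousOn
  have hfX : ContinuousAt f X :=
    hfc.continuousAt (Icc_mem_nhds hX0 hX1)
  have hgcont : ContinuousOn (fun u : ℝ => u ^ (m - 1) * f u) (Ioo 0 1) := by
    apply ContinuousOn.mul
    · intro y hy
      exact (Real.continuousAt_rpow_const y (m - 1) (Or.inl (ne_of_gt hy.1))).continuousWithinAt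
    · exact hfc.mono Ioo_subset_Icc_self
  have hgX : ContinuousAt (fun u : ℝ => u ^ (m - 1) * f u) X :=
    ContinuousAt.mul (Real.continuousAt_rpow_const X (m - 1) (Or.inl hXne)) hfX
  -- FTC
  have hint : IntervalIntegrable (fun u : ℝ => u ^ (m - 1) * f u) MeasureTheory.volume 0 X := by
    apply (intervalIntegrable_rpow' (by linarith : (-1:ℝ) < m - 1)).mul_continuousOn
    apply hfc.mono
    rw [uIcc_of_le hX0.le]
    exact Icc_subset_Icc le_rfl hX1.le
  have hI : HasDerivAt (fun Y => ∫ u in (0:ℝ)..Y, u ^ (m - 1) * f u)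
      (X ^ (m - 1) * f X) X :=
    integral_hasDerivAt_right hint
      (ContinuousOn.stronglyMeasurableAtFilter isOpen_Ioo hgcont X ⟨hX0, hX1⟩) hgX
  have hBd : HasDerivAt B (-(C * (X ^ (m - 1) * f X))) X := by
    have := (hI.const_mul C).const_sub k
    simpa [hB, mul_comm] using this
  -- derivative of the two factors
  have hPow : HasDerivAt (fun Y : ℝ => Y ^ (-(1 / (p - 1))))
      (-(1 / (p - 1)) * X ^ (-(1 / (p - 1)) - 1)) X :=
    Real.hasDerivAt_rpow_const (Or.inl hXne)
  have hBp : HasDerivAt (fun Y => B Y ^ (1 / p))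
      (-(C * (X ^ (m - 1) * f X)) * (1 / p) * B X ^ (1 / p - 1)) X :=
    hBd.rpow_const (Or.inl hbne)
  have hprod := hPow.mul hBp
  have hZfun : Z = fun Y : ℝ => Y ^ (-(1 / (p - 1))) * B Y ^ (1 / p) := funext hZ
  rw [hZfun]
  refine hprod.congr_deriv (Eq.symm ?_)
  beta_reduce
  -- abbreviations
  set b := B X with hbdef
  set t := X ^ (-(1 / (p - 1))) with ht
  set s := b ^ (1 / p) with hs
  have htpos : 0 < t := Real.rpow_pos_of_pos hX0 _
  have hspos : 0 < s := Real.rpow_pos_of_pos hb _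
  have hbne' : b ≠ 0 := hbne
  have hsne : s ≠ 0 := ne_of_gt hspos
  have htne : t ≠ 0 := ne_of_gt htpos
  -- key rpow identities
  have hZp : (t * s) ^ p = t ^ p * b := by
    rw [Real.mul_rpow htpos.le hspos.le, hs, ← Real.rpow_mul hb.le,
      one_div_mul_cancel hp0, Real.rpow_one]
  have htp : t ^ p = t / X := by
    rw [ht, ← Real.rpow_mul hX0.le,
      show -(1 / (p - 1)) * p = -(1 / (p - 1)) - 1 by field_simp; ring,
      Real.rpow_sub hX0, Real.rpow_one]
  have hZpm : (t * s) ^ (p - 1) = (1 / X) * (b / s) := by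
    rw [Real.mul_rpow htpos.le hspos.le, ht, hs, ← Real.rpow_mul hX0.le,
      ← Real.rpow_mul hb.le,
      show -(1 / (p - 1)) * (p - 1) = -1 by field_simp,
      show 1 / p * (p - 1) = 1 - 1 / p by field_simp,
      Real.rpow_neg_one, Real.rpow_sub hb, Real.rpow_one, one_div X]
  have hxg : X ^ (γ / (p - 1) - 1) = X ^ (m - 1) * t := by
    rw [ht, ← Real.rpow_add hX0]
    congr 1
    rw [hγ]
    field_simp
    ring
  have hxp1 : X ^ (-(1 / (p - 1)) - 1) = t / X := by
    rw [ht, Real.rpow_sub hX0, Real.rpow_one]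
  have hbp1 : b ^ (1 / p - 1) = s / b := by
    rw [hs, Real.rpow_sub hb, Real.rpow_one]
  rw [hZp, htp, hZpm, hxg, hxp1, hbp1, hC]
  field_simp
  ring
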